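/- Suppose ρ_h, ω_h, u_h, γ_h : [0,T] → V_h^k (with u_h, ρ_h, ω_h differentiable in s) satisfy, for every cell I_j and all test functions φ, ϕ, ψ, η ∈ V_h^k: ((ρ_h)_s, φ)_{I_j} + ⟨γ̂_h, φ⟩_{I_j} − (γ_h, φ_y)_{I_j} = 0; ((ω_h)_s, ϕ)_{I_j} = (ρ_h u_h, ϕ)_{I_j}; (ω_h, ψ)_{I_j} = ⟨û_h, ψ⟩_{I_j} − (u_h, ψ_y)_{I_j}; and (γ_h, η)_{I_j} = (½ u_h², η)_{I_j}, with numerical fluxes γ̂_h = {γ_h} − β⟦γ_h⟧ and û_h = {u_h} + μ⟦u_h⟧ where β ≥ 0 and μ ≥ 0, and with periodic boundary conditions. Then the scheme is dissipative on H_0: d/ds ∫_{y_L}^{y_R} ρ_h u_h² dy ≤ 0 for all s. -/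

import Mathlib

open MeasureTheory Polynomial
open scoped Classical

noncomputable section

/- Mesh with `N + 1` cells: cell `j` is `I_j = [grid j.castSucc, grid j.succ]`.
A DG function in `V_h^k` is represented by the family of its polynomial restrictions
to the cells; interfaces are treated periodically (indices modulo the number of cells). -/

/-- Left endpoint of cell `j`. -/
def lep {N : ℕ} (grid : Fin (N + 2) → ℝ) (j : Fin (N + 1)) : ℝ := grid j.castSucc

/-- Right endpoint of cell `j`. -/
def rep {N : ℕ} (grid : Fin (N + 2) → ℝ) (j : Fin (N + 1)) : ℝ := grid j.succ

/-- `∫_{I_j} f dy`. -/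
def cellInt {N : ℕ} (grid : Fin (N + 2) → ℝ) (j : Fin (N + 1)) (f : ℝ → ℝ) : ℝ :=
  ∫ y in lep grid j..rep grid j, f y

/-- Trace `w⁻` at the interface `y_{j+1/2}`, from the left cell `I_j`. -/
def trM {N : ℕ} (grid : Fin (N + 2) → ℝ) (f : Fin (N + 1) → Polynomial ℝ)
    (j : Fin (N + 1)) : ℝ :=
  (f j).eval (rep grid j)

/-- Trace `w⁺` at the interface `y_{j+1/2}`, from the right cell `I_{j+1}`
(cyclically, realizing the periodic boundary conditions). -/
def trP {N : ℕ} (grid : Fin (N + 2) → ℝ) (f : Fin (N + 1) → Polynomial ℝ)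
    (j : Fin (N + 1)) : ℝ :=
  (f (j + 1)).eval (lep grid (j + 1))

/-- Average `{w} = (w⁺ + w⁻)/2` at the interface `y_{j+1/2}`. -/
def avg {N : ℕ} (grid : Fin (N + 2) → ℝ) (f : Fin (N + 1) → Polynomial ℝ)
    (j : Fin (N + 1)) : ℝ :=
  (trP grid f j + trM grid f j) / 2

/-- Jump `⟦w⟧ = w⁺ - w⁻` at the interface `y_{j+1/2}`. -/
def jmp {N : ℕ} (grid : Fin (N + 2) → ℝ) (f : Fin (N + 1) → Polynomial ℝ)
    (j : Fin (N + 1)) : ℝ :=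
  trP grid f j - trM grid f j

/-- Boundary bracket `⟨ĥ, φ⟩_{I_j} = ĥ_{j+1/2} φ⁻_{j+1/2} - ĥ_{j-1/2} φ⁺_{j-1/2}`, where the
interface values `ĥ` are indexed by the right interface of each cell (periodically). -/
def brk {N : ℕ} (grid : Fin (N + 2) → ℝ) (hat : Fin (N + 1) → ℝ) (φ : Polynomial ℝ)
    (j : Fin (N + 1)) : ℝ :=
  hat j * φ.eval (rep grid j) - hat (j - 1) * φ.eval (lep grid j)


open Finset
namespace CDDGaux

/-- Lagrange basis at integer nodes `0,...,m`. -/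
def lbasis (m i : ℕ) : Polynomial ℝ :=
  Lagrange.basis (Finset.range (m + 1)) (Nat.cast : ℕ → ℝ) i

lemma injOn_cast (m : ℕ) :
    Set.InjOn (Nat.cast : ℕ → ℝ) (Finset.range (m + 1)) :=
  Nat.cast_injective.injOn

lemma interp_eval {m : ℕ} {P : Polynomial ℝ} (h : P.natDegree ≤ m) (y : ℝ) :
    P.eval y = ∑ i ∈ Finset.range (m + 1), P.eval (i:ℝ) * (lbasis m i).eval y := by
  have hdeg : P.degree < (Finset.range (m + 1)).card := by
    rw [Finset.card_range]
    calc P.degree ≤ (P.natDegree : WithBot ℕ) := Polynomial.degree_le_natDegree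
      _ ≤ (m : WithBot ℕ) := by exact_mod_cast h
      _ < ((m + 1 : ℕ) : WithBot ℕ) := by exact_mod_cast Nat.lt_succ_self m
  conv_lhs => rw [Lagrange.eq_interpolate (injOn_cast m) hdeg]
  simp [Lagrange.interpolate_apply, lbasis, Polynomial.eval_finset_sum]

lemma natDegree_lbasis {m i : ℕ} (hi : i ∈ Finset.range (m + 1)) :
    (lbasis m i).natDegree ≤ m := by
  rw [lbasis, Lagrange.natDegree_basis (injOn_cast m) hi, Finset.card_range]
  omega

lemma deriv_interp {m : ℕ} {P : ℝ → Polynomial ℝ} (hdeg : ∀ τ, (P τ).natDegree ≤ m)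
    {g : ℝ → ℝ} {s : ℝ} (h : ∀ y, HasDerivAt (fun τ => (P τ).eval y) (g y) s) (y : ℝ) :
    g y = ∑ i ∈ Finset.range (m + 1), g (i:ℝ) * (lbasis m i).eval y := by
  have h1 : HasDerivAt
      (fun τ => ∑ i ∈ Finset.range (m + 1), (P τ).eval (i:ℝ) * (lbasis m i).eval y)
      (∑ i ∈ Finset.range (m + 1), g (i:ℝ) * (lbasis m i).eval y) s :=
    HasDerivAt.fun_sum fun i _ => (h i).mul_const _
  have h2 : (fun τ => (P τ).eval y)
      = fun τ => ∑ i ∈ Finset.range (m + 1), (P τ).eval (i:ℝ) * (lbasis m i).eval y :=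
    funext fun τ => interp_eval (hdeg τ) y
  have h3 := h y
  rw [h2] at h3
  exact h3.unique h1

lemma natDegree_deriv_le {m : ℕ} {P : ℝ → Polynomial ℝ} (hdeg : ∀ τ, (P τ).natDegree ≤ m)
    {Q : Polynomial ℝ} {s : ℝ}
    (h : ∀ y, HasDerivAt (fun τ => (P τ).eval y) (Q.eval y) s) :
    Q.natDegree ≤ m := by
  have hq : Q = ∑ i ∈ Finset.range (m + 1), Polynomial.C (Q.eval (i:ℝ)) * lbasis m i := by
    apply Polynomial.funext
    intro y
    rw [Polynomial.eval_finset_sum]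
    simpa [Polynomial.eval_mul] using deriv_interp hdeg h y
  rw [hq]
  refine Polynomial.natDegree_sum_le_of_forall_le _ _ fun i hi => ?_
  exact (Polynomial.natDegree_C_mul_le _ _).trans (natDegree_lbasis hi)

lemma pint (p : Polynomial ℝ) (a b : ℝ) :
    IntervalIntegrable (fun y => p.eval y) MeasureTheory.volume a b :=
  p.continuous.intervalIntegrable a b

lemma integral_interp {m : ℕ} {R : Polynomial ℝ} (hR : R.natDegree ≤ m) (a b : ℝ) :
    (∫ y in a..b, R.eval y)
      = ∑ i ∈ Finset.range (m + 1), R.eval (i:ℝ) * (∫ y in a..b, (lbasis m i).eval y) := by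
  rw [show (fun y => Polynomial.eval y R)
      = fun y => ∑ i ∈ Finset.range (m + 1), R.eval (i:ℝ) * (lbasis m i).eval y from
    funext (interp_eval hR)]
  rw [intervalIntegral.integral_finset_sum
    (fun i _ => (continuous_const.fun_mul (lbasis m i).continuous).intervalIntegrable a b)]
  simp [intervalIntegral.integral_const_mul]

lemma hasDerivAt_integral {m : ℕ} {P : ℝ → Polynomial ℝ} (hdeg : ∀ τ, (P τ).natDegree ≤ m)
    {Q : Polynomial ℝ} {s : ℝ}
    (h : ∀ y, HasDerivAt (fun τ => (P τ).eval y) (Q.eval y) s) (a b : ℝ) :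
    HasDerivAt (fun τ => ∫ y in a..b, (P τ).eval y) (∫ y in a..b, Q.eval y) s := by
  have heq : (fun τ => ∫ y in a..b, (P τ).eval y)
      = fun τ => ∑ i ∈ Finset.range (m + 1),
          (P τ).eval (i:ℝ) * (∫ y in a..b, (lbasis m i).eval y) :=
    funext fun τ => integral_interp (hdeg τ) a b
  rw [heq, integral_interp (natDegree_deriv_le hdeg h) a b]
  exact HasDerivAt.fun_sum fun i _ => (h i).mul_const _

lemma integral_derivative (p : Polynomial ℝ) (a b : ℝ) :
    (∫ y in a..b, p.derivative.eval y) = p.eval b - p.eval a :=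
  intervalIntegral.integral_eq_sub_of_hasDerivAt (fun x _ => p.hasDerivAt x)
    (pint p.derivative a b)

lemma integral_self_mul_deriv (p : Polynomial ℝ) (a b : ℝ) :
    (∫ y in a..b, p.eval y * p.derivative.eval y)
      = (p.eval b ^ 2 - p.eval a ^ 2) / 2 := by
  have h := integral_derivative (p * p) a b
  have h2 : (fun y => ((p * p).derivative).eval y)
      = fun y => 2 * (p.eval y * p.derivative.eval y) := by
    funext y
    simp [Polynomial.derivative_mul]
    ring
  rw [h2, intervalIntegral.integral_const_mul] at h
  simp only [Polynomial.eval_mul] at h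
  rw [pow_two, pow_two]
  linarith [h]

end CDDGaux

/-- Right-trace part of the per-interface energy bookkeeping. -/
def Cf {N : ℕ} (grid : Fin (N + 2) → ℝ) (g uu : Fin (N + 1) → Polynomial ℝ)
    (β μ : ℝ) (j : Fin (N + 1)) : ℝ :=
  trM grid g j ^ 2 - 2 * (avg grid g j - β * jmp grid g j) * trM grid g j
    + 2 * (avg grid uu j + μ * jmp grid uu j) * trM grid uu j - trM grid uu j ^ 2

/-- Left-trace part of the per-interface energy bookkeeping. -/
def Df {N : ℕ} (grid : Fin (N + 2) → ℝ) (g uu : Fin (N + 1) → Polynomial ℝ)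
    (β μ : ℝ) (i : Fin (N + 1)) : ℝ :=
  -(trP grid g i ^ 2) + 2 * (avg grid g i - β * jmp grid g i) * trP grid g i
    - 2 * (avg grid uu i + μ * jmp grid uu i) * trP grid uu i + trP grid uu i ^ 2

lemma Cf_add_Df {N : ℕ} (grid : Fin (N + 2) → ℝ) (g uu : Fin (N + 1) → Polynomial ℝ)
    (β μ : ℝ) (j : Fin (N + 1)) :
    Cf grid g uu β μ j + Df grid g uu β μ j
      = -(2 * β * jmp grid g j ^ 2) - 2 * μ * jmp grid uu j ^ 2 := by
  unfold Cf Df avg jmp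
  ring

/-- **`H₀`-dissipation of the semi-discrete DG scheme for the coupled dispersionless system
`ρ_s + (u²/2)_y = 0`, `u_{ys} = ρu`** (written as `ρ_s + γ_y = 0`, `ω_s = ρu`, `ω = u_y`,
`γ = u²/2`), with the numerical fluxes `γ̂ = {γ} - β⟦γ⟧`, `û = {u} + μ⟦u⟧`, `β, μ ≥ 0`,
and periodic boundary conditions. The discrete quantity `H₀(ρ_h, u_h) = ∫_I ρ_h u_h² dy`
satisfies `d/ds H₀ ≤ 0` for all `s`. -/
theorem CD_DG_H0_dissipative
    (N k : ℕ) (grid : Fin (N + 2) → ℝ) (hgrid : StrictMono grid)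
    (β μ : ℝ) (hβ : 0 ≤ β) (hμ : 0 ≤ μ)
    (ρ w u γ ρ' w' u' : ℝ → Fin (N + 1) → Polynomial ℝ)
    (hdeg : ∀ s j, (ρ s j).natDegree ≤ k ∧ (w s j).natDegree ≤ k ∧
      (u s j).natDegree ≤ k ∧ (γ s j).natDegree ≤ k)
    (hρ' : ∀ (s : ℝ) (j : Fin (N + 1)) (y : ℝ),
      HasDerivAt (fun τ => (ρ τ j).eval y) ((ρ' s j).eval y) s)
    (hw' : ∀ (s : ℝ) (j : Fin (N + 1)) (y : ℝ),
      HasDerivAt (fun τ => (w τ j).eval y) ((w' s j).eval y) s)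
    (hu' : ∀ (s : ℝ) (j : Fin (N + 1)) (y : ℝ),
      HasDerivAt (fun τ => (u τ j).eval y) ((u' s j).eval y) s)
    (scheme1 : ∀ (s : ℝ) (j : Fin (N + 1)) (φ : Polynomial ℝ), φ.natDegree ≤ k →
      cellInt grid j (fun y => (ρ' s j).eval y * φ.eval y)
        + brk grid (fun i => avg grid (γ s) i - β * jmp grid (γ s) i) φ j
        - cellInt grid j (fun y => (γ s j).eval y * φ.derivative.eval y) = 0)
    (scheme2 : ∀ (s : ℝ) (j : Fin (N + 1)) (φ : Polynomial ℝ), φ.natDegree ≤ k →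
      cellInt grid j (fun y => (w' s j).eval y * φ.eval y)
        = cellInt grid j (fun y => (ρ s j).eval y * (u s j).eval y * φ.eval y))
    (scheme3 : ∀ (s : ℝ) (j : Fin (N + 1)) (ψ : Polynomial ℝ), ψ.natDegree ≤ k →
      cellInt grid j (fun y => (w s j).eval y * ψ.eval y)
        = brk grid (fun i => avg grid (u s) i + μ * jmp grid (u s) i) ψ j
          - cellInt grid j (fun y => (u s j).eval y * ψ.derivative.eval y))
    (scheme4 : ∀ (s : ℝ) (j : Fin (N + 1)) (η : Polynomial ℝ), η.natDegree ≤ k →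
      cellInt grid j (fun y => (γ s j).eval y * η.eval y)
        = cellInt grid j (fun y => ((u s j).eval y) ^ 2 / 2 * η.eval y))
    (s : ℝ) :
    ∃ d : ℝ, d ≤ 0 ∧
      HasDerivAt
        (fun τ => ∑ j, cellInt grid j (fun y => (ρ τ j).eval y * ((u τ j).eval y) ^ 2))
        d s := by
  classical
  -- degree bookkeeping
  have hρdeg : ∀ τ j, (ρ τ j).natDegree ≤ k := fun τ j => (hdeg τ j).1
  have hwdeg : ∀ τ j, (w τ j).natDegree ≤ k := fun τ j => (hdeg τ j).2.1
  have hudeg : ∀ τ j, (u τ j).natDegree ≤ k := fun τ j => (hdeg τ j).2.2.1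
  have hγdeg : ∀ τ j, (γ τ j).natDegree ≤ k := fun τ j => (hdeg τ j).2.2.2
  have hu'deg : ∀ j, (u' s j).natDegree ≤ k := fun j =>
    CDDGaux.natDegree_deriv_le (fun τ => hudeg τ j) (fun y => hu' s j y)
  have hρ'deg : ∀ j, (ρ' s j).natDegree ≤ k := fun j =>
    CDDGaux.natDegree_deriv_le (fun τ => hρdeg τ j) (fun y => hρ' s j y)
  -- periodic identification of the left endpoint value with a right trace
  have hPlep : ∀ (f : Fin (N + 1) → Polynomial ℝ) (j : Fin (N + 1)),
      (f j).eval (lep grid j) = trP grid f (j - 1) := by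
    intro f j
    have hj : j - 1 + 1 = j := sub_add_cancel j 1
    rw [trP, hj]
  -- derivative of each cell energy
  have hcell : ∀ j : Fin (N + 1), HasDerivAt
      (fun τ => cellInt grid j fun y => (ρ τ j).eval y * ((u τ j).eval y) ^ 2)
      (cellInt grid j fun y =>
        (ρ' s j * u s j ^ 2 + ρ s j * (2 * u s j * u' s j)).eval y) s := by
    intro j
    have hpt : ∀ y : ℝ, HasDerivAt (fun τ => (ρ τ j * u τ j ^ 2).eval y)
        ((ρ' s j * u s j ^ 2 + ρ s j * (2 * u s j * u' s j)).eval y) s := by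
      intro y
      have h : HasDerivAt (fun τ => (ρ τ j).eval y * ((u τ j).eval y) ^ 2) _ s :=
        (hρ' s j y).fun_mul ((hu' s j y).fun_pow 2)
      have e1 : (fun τ => (ρ τ j * u τ j ^ 2).eval y)
          = fun τ => (ρ τ j).eval y * ((u τ j).eval y) ^ 2 := by
        funext τ; simp
      rw [e1]
      convert h using 1
      simp
    have hdegp : ∀ τ, (ρ τ j * u τ j ^ 2).natDegree ≤ k + 2 * k := by
      intro τ
      refine Polynomial.natDegree_mul_le.trans (add_le_add (hρdeg τ j) ?_)
      simpa [Polynomial.natDegree_pow] using Nat.mul_le_mul_left 2 (hudeg τ j)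
    have h := CDDGaux.hasDerivAt_integral hdegp hpt (lep grid j) (rep grid j)
    have e2 : (fun τ => cellInt grid j fun y => (ρ τ j).eval y * ((u τ j).eval y) ^ 2)
        = fun τ => ∫ y in lep grid j..rep grid j, (ρ τ j * u τ j ^ 2).eval y := by
      funext τ; unfold cellInt; simp
    rw [e2]
    exact h
  -- the time-differentiated third scheme equation
  have hs3' : ∀ (j : Fin (N + 1)) (ψ : Polynomial ℝ), ψ.natDegree ≤ k →
      cellInt grid j (fun y => (w' s j).eval y * ψ.eval y)
        = brk grid (fun i => avg grid (u' s) i + μ * jmp grid (u' s) i) ψ j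
          - cellInt grid j (fun y => (u' s j).eval y * ψ.derivative.eval y) := by
    intro j ψ hψ
    have hF : HasDerivAt (fun τ => cellInt grid j fun y => (w τ j).eval y * ψ.eval y)
        (cellInt grid j fun y => (w' s j).eval y * ψ.eval y) s := by
      have hpt : ∀ y : ℝ, HasDerivAt (fun τ => (w τ j * ψ).eval y)
          ((w' s j * ψ).eval y) s := by
        intro y; simpa [Polynomial.eval_mul] using (hw' s j y).mul_const (ψ.eval y)
      have hdegp : ∀ τ, (w τ j * ψ).natDegree ≤ k + k :=
        fun τ => Polynomial.natDegree_mul_le.trans (add_le_add (hwdeg τ j) hψ)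
      have h := CDDGaux.hasDerivAt_integral hdegp hpt (lep grid j) (rep grid j)
      have e : (fun τ => cellInt grid j fun y => (w τ j).eval y * ψ.eval y)
          = fun τ => ∫ y in lep grid j..rep grid j, (w τ j * ψ).eval y := by
        funext τ; unfold cellInt; simp
      have e2 : (cellInt grid j fun y => (w' s j).eval y * ψ.eval y)
          = ∫ y in lep grid j..rep grid j, (w' s j * ψ).eval y := by
        unfold cellInt; simp
      rw [e, e2]
      exact h
    have hflux : ∀ i : Fin (N + 1),
        HasDerivAt (fun τ => avg grid (u τ) i + μ * jmp grid (u τ) i)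
          (avg grid (u' s) i + μ * jmp grid (u' s) i) s := by
      intro i
      unfold avg jmp trP trM
      exact (((hu' s (i + 1) _).add (hu' s i _)).div_const 2).add
        (((hu' s (i + 1) _).sub (hu' s i _)).const_mul μ)
    have hI : HasDerivAt
        (fun τ => cellInt grid j fun y => (u τ j).eval y * ψ.derivative.eval y)
        (cellInt grid j fun y => (u' s j).eval y * ψ.derivative.eval y) s := by
      have hpt : ∀ y : ℝ, HasDerivAt (fun τ => (u τ j * ψ.derivative).eval y)
          ((u' s j * ψ.derivative).eval y) s := by
        intro y; simpa [Polynomial.eval_mul] using (hu' s j y).mul_const (ψ.derivative.eval y)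
      have hdegp : ∀ τ, (u τ j * ψ.derivative).natDegree ≤ k + k := fun τ =>
        Polynomial.natDegree_mul_le.trans (add_le_add (hudeg τ j)
          ((Polynomial.natDegree_derivative_le ψ).trans (by omega)))
      have h := CDDGaux.hasDerivAt_integral hdegp hpt (lep grid j) (rep grid j)
      have e : (fun τ => cellInt grid j fun y => (u τ j).eval y * ψ.derivative.eval y)
          = fun τ => ∫ y in lep grid j..rep grid j, (u τ j * ψ.derivative).eval y := by
        funext τ; unfold cellInt; simp
      have e2 : (cellInt grid j fun y => (u' s j).eval y * ψ.derivative.eval y)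
          = ∫ y in lep grid j..rep grid j, (u' s j * ψ.derivative).eval y := by
        unfold cellInt; simp
      rw [e, e2]
      exact h
    have hG : HasDerivAt
        (fun τ => brk grid (fun i => avg grid (u τ) i + μ * jmp grid (u τ) i) ψ j
          - cellInt grid j fun y => (u τ j).eval y * ψ.derivative.eval y)
        (brk grid (fun i => avg grid (u' s) i + μ * jmp grid (u' s) i) ψ j
          - cellInt grid j fun y => (u' s j).eval y * ψ.derivative.eval y) s := by
      unfold brk
      exact (((hflux j).mul_const _).sub ((hflux (j - 1)).mul_const _)).sub hI
    have hEq : (fun τ => cellInt grid j fun y => (w τ j).eval y * ψ.eval y)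
        = fun τ => brk grid (fun i => avg grid (u τ) i + μ * jmp grid (u τ) i) ψ j
            - cellInt grid j fun y => (u τ j).eval y * ψ.derivative.eval y :=
      funext fun τ => scheme3 τ j ψ hψ
    rw [hEq] at hF
    exact hF.unique hG
  -- per-cell energy identity
  have key : ∀ j : Fin (N + 1),
      (cellInt grid j fun y =>
        (ρ' s j * u s j ^ 2 + ρ s j * (2 * u s j * u' s j)).eval y)
        = Cf grid (γ s) (u' s) β μ j + Df grid (γ s) (u' s) β μ (j - 1) := by
    intro j
    have h1 := scheme1 s j (γ s j) (hγdeg s j)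
    have h4 := scheme4 s j (ρ' s j) (hρ'deg j)
    have h2 := scheme2 s j (u' s j) (hu'deg j)
    have h3 := hs3' j (u' s j) (hu'deg j)
    have hγγ : cellInt grid j (fun y => (γ s j).eval y * (γ s j).derivative.eval y)
        = (trM grid (γ s) j ^ 2 - trP grid (γ s) (j - 1) ^ 2) / 2 := by
      unfold cellInt
      rw [CDDGaux.integral_self_mul_deriv, hPlep (γ s) j]
      rfl
    have huu : cellInt grid j (fun y => (u' s j).eval y * (u' s j).derivative.eval y)
        = (trM grid (u' s) j ^ 2 - trP grid (u' s) (j - 1) ^ 2) / 2 := by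
      unfold cellInt
      rw [CDDGaux.integral_self_mul_deriv, hPlep (u' s) j]
      rfl
    have hcomm : cellInt grid j (fun y => (ρ' s j).eval y * (γ s j).eval y)
        = cellInt grid j (fun y => (γ s j).eval y * (ρ' s j).eval y) := by
      unfold cellInt
      exact intervalIntegral.integral_congr fun y _ => mul_comm _ _
    have hbrkγ : brk grid (fun i => avg grid (γ s) i - β * jmp grid (γ s) i) (γ s j) j
        = (avg grid (γ s) j - β * jmp grid (γ s) j) * trM grid (γ s) j
          - (avg grid (γ s) (j - 1) - β * jmp grid (γ s) (j - 1))
            * trP grid (γ s) (j - 1) := by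
      unfold brk
      rw [hPlep (γ s) j]
      rfl
    have hbrku : brk grid (fun i => avg grid (u' s) i + μ * jmp grid (u' s) i) (u' s j) j
        = (avg grid (u' s) j + μ * jmp grid (u' s) j) * trM grid (u' s) j
          - (avg grid (u' s) (j - 1) + μ * jmp grid (u' s) (j - 1))
            * trP grid (u' s) (j - 1) := by
      unfold brk
      rw [hPlep (u' s) j]
      rfl
    have hQsplit : (cellInt grid j fun y =>
          (ρ' s j * u s j ^ 2 + ρ s j * (2 * u s j * u' s j)).eval y)
        = 2 * cellInt grid j (fun y => ((u s j).eval y) ^ 2 / 2 * (ρ' s j).eval y)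
          + 2 * cellInt grid j
              (fun y => (ρ s j).eval y * (u s j).eval y * (u' s j).eval y) := by
      unfold cellInt
      rw [← intervalIntegral.integral_const_mul, ← intervalIntegral.integral_const_mul,
        ← intervalIntegral.integral_add
          (by apply Continuous.intervalIntegrable; fun_prop)
          (by apply Continuous.intervalIntegrable; fun_prop)]
      apply intervalIntegral.integral_congr
      intro y _
      simp only [Polynomial.eval_add, Polynomial.eval_mul, Polynomial.eval_pow,
        Polynomial.eval_ofNat]
      ring
    rw [hQsplit, ← h4, hcomm.symm]
    rw [hbrkγ, hγγ] at h1
    rw [h3, hbrku, huu] at h2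
    rw [← h2]
    unfold Cf Df
    linarith [h1]
  -- assemble
  refine ⟨∑ j, cellInt grid j fun y =>
      (ρ' s j * u s j ^ 2 + ρ s j * (2 * u s j * u' s j)).eval y, ?_,
    HasDerivAt.fun_sum fun j _ => hcell j⟩
  calc (∑ j, cellInt grid j fun y =>
          (ρ' s j * u s j ^ 2 + ρ s j * (2 * u s j * u' s j)).eval y)
      = ∑ j, (Cf grid (γ s) (u' s) β μ j + Df grid (γ s) (u' s) β μ (j - 1)) :=
        Finset.sum_congr rfl fun j _ => key j
    _ = (∑ j, Cf grid (γ s) (u' s) β μ j)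
          + ∑ j, Df grid (γ s) (u' s) β μ (j - 1) := Finset.sum_add_distrib
    _ = (∑ j, Cf grid (γ s) (u' s) β μ j)
          + ∑ j, Df grid (γ s) (u' s) β μ j := by
        rw [Fintype.sum_equiv (Equiv.subRight (1 : Fin (N + 1)))
          (fun j => Df grid (γ s) (u' s) β μ (j - 1))
          (Df grid (γ s) (u' s) β μ) (fun j => rfl)]
    _ = ∑ j, (Cf grid (γ s) (u' s) β μ j + Df grid (γ s) (u' s) β μ j) :=
        Finset.sum_add_distrib.symm
    _ = ∑ j, (-(2 * β * jmp grid (γ s) j ^ 2) - 2 * μ * jmp grid (u' s) j ^ 2) :=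
        Finset.sum_congr rfl fun j _ => Cf_add_Df grid (γ s) (u' s) β μ j
    _ ≤ 0 := Finset.sum_nonpos fun j _ => by
        have h1 := mul_nonneg (mul_nonneg (by norm_num : (0:ℝ) ≤ 2) hβ)
          (sq_nonneg (jmp grid (γ s) j))
        have h2 := mul_nonneg (mul_nonneg (by norm_num : (0:ℝ) ≤ 2) hμ)
          (sq_nonneg (jmp grid (u' s) j))
        linarith


end
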